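/- Let n be a natural number, let q, p : Fin n → ℂ with p injective, and define the n×n complex matrices D = diag(q_1,…,q_n) and A with A i i = 0 and A i j = i/(p i − p j) for i ≠ j, where i is the imaginary unit. Then 2·trace(D²A²) + trace(D·A·D·A) = 2 Σ_{i<j} ((q i)² + (q i)(q j) + (q j)²)/(p i − p j)². -/

import Mathlib

lemma pair_sum_helper {α : Type*} [Fintype α] [LinearOrder α] (f : α → α → ℂ)
    (hd : ∀ i, f i i = 0) :
    ∑ i, ∑ j, f i j = ∑ i, ∑ j, if i < j then f i j + f j i else 0 := by
  have key : ∀ i j : α, f i j =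
      (if i < j then f i j else 0) + (if j < i then f i j else 0) := by
    intro i j
    rcases lt_trichotomy i j with h | h | h
    · simp [h, not_lt_of_gt h]
    · simp [h, hd]
    · simp [h, not_lt_of_gt h]
  calc ∑ i, ∑ j, f i j
      = ∑ i, ∑ j, ((if i < j then f i j else 0) + (if j < i then f i j else 0)) := by
        refine Finset.sum_congr rfl fun i _ => Finset.sum_congr rfl fun j _ => key i j
    _ = (∑ i, ∑ j, (if i < j then f i j else 0))
        + ∑ i, ∑ j, (if j < i then f i j else 0) := by
        simp [Finset.sum_add_distrib]
    _ = (∑ i, ∑ j, (if i < j then f i j else 0))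
        + ∑ i, ∑ j, (if i < j then f j i else 0) := by
        rw [Finset.sum_comm (f := fun i j => if j < i then f i j else 0)]
    _ = ∑ i, ∑ j, if i < j then f i j + f j i else 0 := by
        rw [← Finset.sum_add_distrib]
        refine Finset.sum_congr rfl fun i _ => ?_
        rw [← Finset.sum_add_distrib]
        refine Finset.sum_congr rfl fun j _ => ?_
        by_cases h : i < j <;> simp [h]

/-- The `g²`-interaction term of the dual Calogero–Painlevé II Hamiltonian:
for `D = diag(q)` and `A` with zero diagonal and off-diagonal entries `I/(p i − p j)`,
`2 Tr(D²A²) + Tr(DADA) = 2 Σ_{i<j} (q i² + q i q j + q j²)/(p i − p j)²`. -/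
theorem interaction_term_g_squared (n : ℕ) (q p : Fin n → ℂ) (hp : Function.Injective p) :
    2 * Matrix.trace ((Matrix.diagonal q) ^ 2 *
          (Matrix.of fun i j : Fin n => if i = j then 0 else Complex.I / (p i - p j)) ^ 2)
      + Matrix.trace (Matrix.diagonal q *
          (Matrix.of fun i j : Fin n => if i = j then 0 else Complex.I / (p i - p j)) *
          Matrix.diagonal q *
          (Matrix.of fun i j : Fin n => if i = j then 0 else Complex.I / (p i - p j)))
      = 2 * ∑ i, ∑ j, if i < j then
          ((q i) ^ 2 + q i * q j + (q j) ^ 2) / (p i - p j) ^ 2 else 0 := by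
  classical
  set A : Matrix (Fin n) (Fin n) ℂ :=
    Matrix.of fun i j : Fin n => if i = j then 0 else Complex.I / (p i - p j) with hA
  have hAe : ∀ i j, A i j = if i = j then 0 else Complex.I / (p i - p j) := fun i j => rfl
  -- key pointwise product
  have hprod : ∀ i j : Fin n, i ≠ j → A i j * A j i = 1 / (p i - p j) ^ 2 := by
    intro i j hij
    have hpij : p i - p j ≠ 0 := sub_ne_zero.mpr (fun h => hij (hp h))
    rw [hAe, hAe, if_neg hij, if_neg (Ne.symm hij)]
    rw [div_mul_div_comm, Complex.I_mul_I,
      show (p i - p j) * (p j - p i) = -((p i - p j) ^ 2) by ring, neg_div_neg_eq]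
  have e1 : Matrix.trace ((Matrix.diagonal q) ^ 2 * A ^ 2)
      = ∑ i, ∑ j, (q i) ^ 2 * (A i j * A j i) := by
    simp [Matrix.trace, Matrix.diag, pow_two, Matrix.mul_apply, Matrix.diagonal,
      Finset.mul_sum, mul_assoc]
  have e2 : Matrix.trace (Matrix.diagonal q * A * Matrix.diagonal q * A)
      = ∑ i, ∑ j, (q i * q j) * (A i j * A j i) := by
    simp [Matrix.trace, Matrix.diag, Matrix.mul_apply, Matrix.diagonal,
      Finset.mul_sum, Finset.sum_mul]
    refine Finset.sum_congr rfl fun i _ => Finset.sum_congr rfl fun j _ => by ring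
  rw [e1, e2]
  simp_rw [Finset.mul_sum, ← Finset.sum_add_distrib]
  have lhs_eq : ∀ i j : Fin n,
      2 * ((q i) ^ 2 * (A i j * A j i)) + (q i * q j) * (A i j * A j i)
      = (fun i j => if i = j then 0 else
          (2 * (q i) ^ 2 + q i * q j) / (p i - p j) ^ 2) i j := by
    intro i j
    by_cases h : i = j
    · simp [h, hAe]
    · simp only [h, if_false]
      rw [hprod i j h]
      ring
  calc ∑ i, ∑ j, (2 * ((q i) ^ 2 * (A i j * A j i)) + (q i * q j) * (A i j * A j i))
      = ∑ i, ∑ j, (fun i j => if i = j then 0 else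
          (2 * (q i) ^ 2 + q i * q j) / (p i - p j) ^ 2) i j := by
        exact Finset.sum_congr rfl fun i _ => Finset.sum_congr rfl fun j _ => lhs_eq i j
    _ = ∑ i, ∑ j, if i < j then
          ((if i = j then 0 else (2 * (q i) ^ 2 + q i * q j) / (p i - p j) ^ 2)
           + (if j = i then 0 else (2 * (q j) ^ 2 + q j * q i) / (p j - p i) ^ 2)) else 0 := by
        exact pair_sum_helper _ (fun i => by simp)
    _ = ∑ i, ∑ j, if i < j then
          2 * (((q i) ^ 2 + q i * q j + (q j) ^ 2) / (p i - p j) ^ 2) else 0 := by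
        refine Finset.sum_congr rfl fun i _ => Finset.sum_congr rfl fun j _ => ?_
        by_cases h : i < j
        · have hne : i ≠ j := ne_of_lt h
          simp only [h, if_true, hne, Ne.symm hne, if_false]
          have hd : (p j - p i) ^ 2 = (p i - p j) ^ 2 := by ring
          rw [hd, ← add_div]
          ring
        · simp [h]
    _ = ∑ i, ∑ j, 2 * if i < j then
          ((q i) ^ 2 + q i * q j + (q j) ^ 2) / (p i - p j) ^ 2 else 0 := by
        refine Finset.sum_congr rfl fun i _ => Finset.sum_congr rfl fun j _ => ?_
        rw [mul_ite, mul_zero]
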